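/- arXiv:2102.13306 — 2 statements merged into one kernel-verified Lean document; each statement's English description precedes it below -/
import Mathlib

section
/- Let G be a (1,0)-stable graph and Y a maximum independent set of G. Then there is a matching in G saturating Y, i.e., an injection f : Y → V(G) \ Y such that each y ∈ Y is adjacent to f(y). -/
open SimpleGraph Set

/-- The independence number of `G` restricted to a vertex subset `A`:
the largest cardinality of a finite set of vertices inside `A` that is
pairwise non-adjacent in `G`. -/
noncomputable def indepNumOn {V : Type*} (G : SimpleGraph V) (A : Set V) : ℕ :=
  sSup {n | ∃ s : Finset V, ↑s ⊆ A ∧ s.card = n ∧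
    ∀ x ∈ s, ∀ y ∈ s, x ≠ y → ¬ G.Adj x y}

/-- The independence number of `G`. -/
noncomputable def indepNum {V : Type*} (G : SimpleGraph V) : ℕ :=
  indepNumOn G Set.univ

/-- `G` is `(k, l)`-stable: removing any `k` vertices decreases the
independence number by at most `l`. -/
def IsStable {V : Type*} (G : SimpleGraph V) (k l : ℕ) : Prop :=
  ∀ S : Finset V, S.card = k → _root_.indepNum G ≤ indepNumOn G (↑S : Set V)ᶜ + l

section Aux

variable {V : Type*} [Fintype V] (G : SimpleGraph V)

lemma bddAbove_indepSet (A : Set V) :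
    BddAbove {n | ∃ s : Finset V, ↑s ⊆ A ∧ s.card = n ∧
      ∀ x ∈ s, ∀ y ∈ s, x ≠ y → ¬ G.Adj x y} := by
  refine ⟨Fintype.card V, ?_⟩
  rintro n ⟨s, -, rfl, -⟩
  exact s.card_le_univ

lemma card_le_indepNum (s : Finset V)
    (h : ∀ x ∈ s, ∀ y ∈ s, x ≠ y → ¬ G.Adj x y) : s.card ≤ _root_.indepNum G :=
  le_csSup (bddAbove_indepSet G Set.univ) ⟨s, by simp, rfl, h⟩

lemma exists_max_indep_avoid
    (hstable : ∀ v : V, indepNumOn G ({v} : Set V)ᶜ = _root_.indepNum G) (v : V) :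
    ∃ I : Finset V, v ∉ I ∧ I.card = _root_.indepNum G ∧
      ∀ x ∈ I, ∀ y ∈ I, x ≠ y → ¬ G.Adj x y := by
  have hne : ({n | ∃ s : Finset V, ↑s ⊆ ({v} : Set V)ᶜ ∧ s.card = n ∧
      ∀ x ∈ s, ∀ y ∈ s, x ≠ y → ¬ G.Adj x y}).Nonempty :=
    ⟨0, ∅, by simp, rfl, by simp⟩
  obtain ⟨I, hIA, hIcard, hIind⟩ := Nat.sSup_mem hne (bddAbove_indepSet G _)
  refine ⟨I, fun hv => ?_, ?_, hIind⟩
  · exact hIA (Finset.mem_coe.mpr hv) rfl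
  · rw [hIcard]; exact hstable v

lemma hall_condition [DecidableEq V] [DecidableRel G.Adj]
    (hstable : ∀ v : V, indepNumOn G ({v} : Set V)ᶜ = _root_.indepNum G)
    (Y : Finset V) (hind : ∀ x ∈ Y, ∀ y ∈ Y, x ≠ y → ¬ G.Adj x y)
    (hcard : Y.card = _root_.indepNum G) :
    ∀ S : Finset V, S ⊆ Y →
      S.card ≤ (S.biUnion (fun a => G.neighborFinset a \ Y)).card := by
  intro S
  induction S using Finset.strongInduction with
  | _ S ih =>
    intro hSY
    by_contra hlt
    push_neg at hlt
    set T := S.biUnion (fun a => G.neighborFinset a \ Y) with hTdef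
    have hSne : S.Nonempty := by
      rcases S.eq_empty_or_nonempty with rfl | h
      · simp at hlt
      · exact h
    obtain ⟨y, hyS⟩ := hSne
    -- Hall's condition for `S.erase y`, from the induction hypothesis
    have hallSub : ∀ s : Finset {x // x ∈ S.erase y},
        s.card ≤ (s.biUnion (fun a => G.neighborFinset (a : V) \ Y)).card := by
      intro s
      have h1 : (s.image (Subtype.val)).card = s.card :=
        Finset.card_image_of_injective _ Subtype.val_injective
      have h2 : (s.image Subtype.val).biUnion (fun a => G.neighborFinset a \ Y)
          = s.biUnion (fun a => G.neighborFinset (a : V) \ Y) :=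
        Finset.image_biUnion
      have hsub : s.image Subtype.val ⊂ S := by
        refine Finset.ssubset_of_subset_of_ssubset ?_ (Finset.erase_ssubset hyS)
        intro x hx
        obtain ⟨a, _, rfl⟩ := Finset.mem_image.mp hx
        exact a.2
      have hsubY : s.image Subtype.val ⊆ Y :=
        fun x hx => hSY (hsub.1 hx)
      calc s.card = (s.image Subtype.val).card := h1.symm
        _ ≤ ((s.image Subtype.val).biUnion (fun a => G.neighborFinset a \ Y)).card :=
            ih _ hsub hsubY
        _ = _ := by rw [h2]
    obtain ⟨g, hginj, hgmem⟩ :=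
      (Finset.all_card_le_biUnion_card_iff_existsInjective' _).mp hallSub
    have hgT : ∀ a : {x // x ∈ S.erase y}, g a ∈ T := fun a =>
      Finset.mem_biUnion.mpr ⟨a, Finset.mem_of_mem_erase a.2, hgmem a⟩
    -- card bound : S.card - 1 ≤ T.card
    have himg : Finset.univ.image g ⊆ T := by
      intro x hx
      obtain ⟨a, -, rfl⟩ := Finset.mem_image.mp hx
      exact hgT a
    have hcard1 : S.card - 1 ≤ T.card := by
      have : (Finset.univ.image g).card = S.card - 1 := by
        rw [Finset.card_image_of_injective _ hginj, Finset.card_univ,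
          Fintype.card_coe, Finset.card_erase_of_mem hyS]
      calc S.card - 1 = (Finset.univ.image g).card := this.symm
        _ ≤ T.card := Finset.card_le_card himg
    obtain ⟨I, hyI, hIcard, hIind⟩ := exists_max_indep_avoid G hstable y
    -- injection from I ∩ (S ∪ T) into T
    have hIST : (I ∩ (S ∪ T)).card ≤ T.card := by
      refine Finset.card_le_card_of_injOn
        (fun x => if hx : x ∈ S.erase y then g ⟨x, hx⟩ else x) ?_ ?_
      · intro x hx
        rw [Finset.mem_coe, Finset.mem_inter, Finset.mem_union] at hx
        by_cases hx' : x ∈ S.erase y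
        · simp only [dif_pos hx']; exact hgT ⟨x, hx'⟩
        · simp only [dif_neg hx']
          rcases hx.2 with hxS | hxT
          · exfalso
            have : x = y := by
              by_contra hne
              exact hx' (Finset.mem_erase.mpr ⟨hne, hxS⟩)
            exact hyI (this ▸ hx.1)
          · exact hxT
      · intro x hx z hz heq
        simp only [Finset.coe_inter, Set.mem_inter_iff, Finset.mem_coe,
          Finset.mem_inter] at hx hz
        by_cases hx' : x ∈ S.erase y <;> by_cases hz' : z ∈ S.erase y
        · simp only [dif_pos hx', dif_pos hz'] at heq
          exact congrArg Subtype.val (hginj heq)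
        · simp only [dif_pos hx', dif_neg hz'] at heq
          exfalso
          have hmem := hgmem ⟨x, hx'⟩
          rw [heq, Finset.mem_sdiff, SimpleGraph.mem_neighborFinset] at hmem
          have hxz : x ≠ z := fun h => hmem.2 (h ▸ hSY (Finset.mem_of_mem_erase hx'))
          exact hIind x hx.1 z hz.1 hxz hmem.1
        · simp only [dif_neg hx', dif_pos hz'] at heq
          exfalso
          have hmem := hgmem ⟨z, hz'⟩
          rw [← heq, Finset.mem_sdiff, SimpleGraph.mem_neighborFinset] at hmem
          have hzx : z ≠ x := fun h => hmem.2 (h ▸ hSY (Finset.mem_of_mem_erase hz'))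
          exact hIind z hz.1 x hx.1 hzx hmem.1
        · simp only [dif_neg hx', dif_neg hz'] at heq
          exact heq
    -- the set K = (I \ (S ∪ T)) ∪ S is independent and too large
    set K := (I \ (S ∪ T)) ∪ S with hKdef
    have hTnotY : ∀ x ∈ T, x ∉ Y := by
      intro x hx
      obtain ⟨a, -, ha⟩ := Finset.mem_biUnion.mp hx
      exact (Finset.mem_sdiff.mp ha).2
    have hkey : ∀ x ∈ I \ (S ∪ T), ∀ z ∈ S, ¬ G.Adj x z := by
      intro x hx z hz hadj
      rw [Finset.mem_sdiff, Finset.mem_union] at hx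
      by_cases hxY : x ∈ Y
      · exact hind x hxY z (hSY hz) (G.ne_of_adj hadj) hadj
      · exact hx.2 (Or.inr (Finset.mem_biUnion.mpr ⟨z, hz,
          Finset.mem_sdiff.mpr ⟨(SimpleGraph.mem_neighborFinset G z x).mpr hadj.symm, hxY⟩⟩))
    have hKind : ∀ x ∈ K, ∀ z ∈ K, x ≠ z → ¬ G.Adj x z := by
      intro x hx z hz hxz hadj
      rw [hKdef, Finset.mem_union] at hx hz
      rcases hx with hx | hx <;> rcases hz with hz | hz
      · exact hIind x (Finset.mem_sdiff.mp hx).1 z (Finset.mem_sdiff.mp hz).1 hxz hadj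
      · exact hkey x hx z hz hadj
      · exact hkey z hz x hx hadj.symm
      · exact hind x (hSY hx) z (hSY hz) hxz hadj
    have hdisj : Disjoint (I \ (S ∪ T)) S := by
      rw [Finset.disjoint_left]
      intro x hx hxS
      exact (Finset.mem_sdiff.mp hx).2 (Finset.mem_union_left _ hxS)
    have hKcard : K.card = (I \ (S ∪ T)).card + S.card :=
      Finset.card_union_of_disjoint hdisj
    have hsplit : (I ∩ (S ∪ T)).card + (I \ (S ∪ T)).card = I.card :=
      Finset.card_inter_add_card_sdiff I (S ∪ T)
    have hKle : K.card ≤ _root_.indepNum G := card_le_indepNum G K hKind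
    have hSle : S.card ≤ _root_.indepNum G := hcard ▸ Finset.card_le_card hSY
    have hS1 : 1 ≤ S.card := Finset.card_pos.mpr ⟨y, hyS⟩
    omega

end Aux

theorem exists_matching_saturating_max_indep {V : Type*} [Fintype V] (G : SimpleGraph V)
    (hstable : ∀ v : V, indepNumOn G ({v} : Set V)ᶜ = _root_.indepNum G)
    (Y : Finset V) (hind : ∀ x ∈ Y, ∀ y ∈ Y, x ≠ y → ¬ G.Adj x y)
    (hcard : Y.card = _root_.indepNum G) :
    ∃ f : V → V, Set.InjOn f ↑Y ∧ ∀ y ∈ Y, f y ∉ Y ∧ G.Adj y (f y) := by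
  classical
  have hall := hall_condition G hstable Y hind hcard
  have hallY : ∀ s : Finset {x // x ∈ Y},
      s.card ≤ (s.biUnion (fun a => G.neighborFinset (a : V) \ Y)).card := by
    intro s
    have h1 : (s.image (Subtype.val)).card = s.card :=
      Finset.card_image_of_injective _ Subtype.val_injective
    have h2 : (s.image Subtype.val).biUnion (fun a => G.neighborFinset a \ Y)
        = s.biUnion (fun a => G.neighborFinset (a : V) \ Y) :=
      Finset.image_biUnion
    have hsub : s.image Subtype.val ⊆ Y := by
      intro x hx
      obtain ⟨a, _, rfl⟩ := Finset.mem_image.mp hx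
      exact a.2
    calc s.card = (s.image Subtype.val).card := h1.symm
      _ ≤ _ := hall _ hsub
      _ = _ := by rw [h2]
  obtain ⟨g, hginj, hgmem⟩ :=
    (Finset.all_card_le_biUnion_card_iff_existsInjective' _).mp hallY
  refine ⟨fun v => if hv : v ∈ Y then g ⟨v, hv⟩ else v, ?_, ?_⟩
  · intro a ha b hb heq
    rw [Finset.mem_coe] at ha hb
    simp only [dif_pos ha, dif_pos hb] at heq
    exact congrArg Subtype.val (hginj heq)
  · intro y hy
    simp only [dif_pos hy]
    have := hgmem ⟨y, hy⟩
    rw [Finset.mem_sdiff, SimpleGraph.mem_neighborFinset] at this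
    exact ⟨this.2, this.1⟩
end

section
/- Let G be a (1,0)-stable graph and Y a maximum independent set. Then Hall's condition holds from Y to V(G) \ Y: for every subset Y' ⊆ Y, the neighborhood N(Y') in V(G) \ Y' has size at least |Y'|. -/
open SimpleGraph Set

private lemma indep_le_indepNum {V : Type*} [Fintype V] (G : SimpleGraph V) (J : Finset V)
    (h : ∀ x ∈ J, ∀ y ∈ J, x ≠ y → ¬ G.Adj x y) : J.card ≤ _root_.indepNum G := by
  apply le_csSup
  · refine ⟨Fintype.card V, ?_⟩
    rintro n ⟨s, -, hc, -⟩
    exact hc ▸ s.card_le_univ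
  · exact ⟨J, by simp, rfl, h⟩

private lemma indepNumOn_attained {V : Type*} [Fintype V] (G : SimpleGraph V) (A : Set V) :
    ∃ s : Finset V, ↑s ⊆ A ∧ s.card = indepNumOn G A ∧
      ∀ x ∈ s, ∀ y ∈ s, x ≠ y → ¬ G.Adj x y := by
  have h := Nat.sSup_mem (s := {n | ∃ s : Finset V, ↑s ⊆ A ∧ s.card = n ∧
      ∀ x ∈ s, ∀ y ∈ s, x ≠ y → ¬ G.Adj x y})
    ⟨0, ∅, by simp⟩ ⟨Fintype.card V, by rintro n ⟨s, -, hc, -⟩; exact hc ▸ s.card_le_univ⟩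
  exact h

theorem hall_condition_max_indep {V : Type*} [Fintype V] (G : SimpleGraph V)
    (hstable : ∀ v : V, indepNumOn G ({v} : Set V)ᶜ = _root_.indepNum G)
    (Y : Finset V) (hind : ∀ x ∈ Y, ∀ y ∈ Y, x ≠ y → ¬ G.Adj x y)
    (hcard : Y.card = _root_.indepNum G)
    (Y' : Finset V) (hY' : Y' ⊆ Y) :
    Y'.card ≤ {u : V | u ∉ Y' ∧ ∃ y ∈ Y', G.Adj y u}.ncard := by
  classical
  have key : ∀ n : ℕ, ∀ Z : Finset V, Z.card = n → Z ⊆ Y →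
      Z.card ≤ (Finset.univ.filter (fun u => u ∉ Z ∧ ∃ y ∈ Z, G.Adj y u)).card := by
    intro n
    induction n using Nat.strong_induction_on with
    | _ n ih =>
    intro Z hZn hZY
    by_contra hcon
    push_neg at hcon
    set N := Finset.univ.filter (fun u => u ∉ Z ∧ ∃ y ∈ Z, G.Adj y u) with hN
    have hNmem : ∀ u, u ∈ N ↔ (u ∉ Z ∧ ∃ y ∈ Z, G.Adj y u) := by
      intro u; simp [hN]
    -- Z is nonempty
    have hZne : Z.Nonempty := by
      rcases Z.eq_empty_or_nonempty with h | h
      · rw [h] at hcon; simp at hcon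
      · exact h
    obtain ⟨v, hv⟩ := hZne
    obtain ⟨I, hIsub, hIcard, hIind⟩ := indepNumOn_attained G ({v} : Set V)ᶜ
    have hvI : v ∉ I := fun h => (hIsub h) rfl
    rw [hstable v] at hIcard
    set Y'' := Z ∩ I with hY''
    set W := Z \ I with hW
    have hY''Z : Y'' ⊆ Z := Finset.inter_subset_left
    have hvW : v ∈ W := Finset.mem_sdiff.mpr ⟨hv, hvI⟩
    have hY''lt : Y''.card < n := by
      rw [← hZn]
      apply Finset.card_lt_card
      refine (Finset.ssubset_iff_of_subset hY''Z).2 ⟨v, hv, ?_⟩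
      intro h
      exact hvI (Finset.mem_inter.mp h).2
    set N'' := Finset.univ.filter (fun u => u ∉ Y'' ∧ ∃ y ∈ Y'', G.Adj y u) with hN''
    have hih : Y''.card ≤ N''.card := ih _ hY''lt _ rfl ((Finset.inter_subset_left).trans hZY)
    -- N'' ⊆ N
    have hN''N : N'' ⊆ N := by
      intro u hu
      simp only [hN'', Finset.mem_filter, Finset.mem_univ, true_and] at hu
      obtain ⟨huY'', y, hy, hadj⟩ := hu
      have hyZ : y ∈ Z := hY''Z hy
      have huZ : u ∉ Z := by
        intro huZ
        exact hind y (hZY hyZ) u (hZY huZ) hadj.ne hadj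
      exact (hNmem u).2 ⟨huZ, y, hyZ, hadj⟩
    -- I ∩ N is disjoint from N''
    have hdisj : Disjoint (I ∩ N) N'' := by
      rw [Finset.disjoint_left]
      intro u hu hu''
      simp only [hN'', Finset.mem_filter, Finset.mem_univ, true_and] at hu''
      obtain ⟨-, y, hy, hadj⟩ := hu''
      have hyI : y ∈ I := (Finset.mem_inter.mp hy).2
      exact hIind y hyI u (Finset.mem_inter.mp hu).1 hadj.ne hadj
    have hcards : (I ∩ N).card + N''.card ≤ N.card := by
      rw [← Finset.card_union_of_disjoint hdisj]
      exact Finset.card_le_card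
        (Finset.union_subset (Finset.inter_subset_right) hN''N)
    -- Z is disjoint from N
    have hZN : ∀ u ∈ Z, u ∉ N := fun u hu h => ((hNmem u).1 h).1 hu
    -- J := (I \ N) ∪ Z  is independent
    set J := (I \ N) ∪ Z with hJ
    have hJind : ∀ x ∈ J, ∀ y ∈ J, x ≠ y → ¬ G.Adj x y := by
      intro x hx y hy hne hadj
      have hcross : ∀ a, a ∈ I \ N → ∀ b, b ∈ Z → ¬ G.Adj a b := by
        intro a ha b hb hab
        rcases Finset.mem_sdiff.mp ha with ⟨haI, haN⟩
        by_cases haZ : a ∈ Z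
        · exact hind a (hZY haZ) b (hZY hb) hab.ne hab
        · exact haN ((hNmem a).2 ⟨haZ, b, hb, hab.symm⟩)
      rcases Finset.mem_union.mp hx with hx | hx <;>
        rcases Finset.mem_union.mp hy with hy | hy
      · exact hIind x (Finset.mem_sdiff.mp hx).1 y (Finset.mem_sdiff.mp hy).1 hne hadj
      · exact hcross x hx y hy hadj
      · exact hcross y hy x hx hadj.symm
      · exact hind x (hZY hx) y (hZY hy) hne hadj
    have hJle : J.card ≤ _root_.indepNum G := indep_le_indepNum G J hJind
    -- compute J.card
    have hY''IN : Y'' ⊆ I \ N := by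
      intro u hu
      exact Finset.mem_sdiff.mpr ⟨(Finset.mem_inter.mp hu).2, hZN u (hY''Z hu)⟩
    have hJeq : J = (I \ N) ∪ W := by
      apply Finset.Subset.antisymm
      · intro u hu
        rcases Finset.mem_union.mp hu with h | h
        · exact Finset.mem_union_left _ h
        · by_cases huI : u ∈ I
          · exact Finset.mem_union_left _ (hY''IN (Finset.mem_inter.mpr ⟨h, huI⟩))
          · exact Finset.mem_union_right _ (Finset.mem_sdiff.mpr ⟨h, huI⟩)
      · apply Finset.union_subset (Finset.subset_union_left)
        exact (Finset.sdiff_subset).trans Finset.subset_union_right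
    have hdisjW : Disjoint (I \ N) W := by
      rw [Finset.disjoint_left]
      intro u hu huW
      exact (Finset.mem_sdiff.mp huW).2 (Finset.mem_sdiff.mp hu).1
    have hJcard : J.card = (I \ N).card + W.card := by
      rw [hJeq, Finset.card_union_of_disjoint hdisjW]
    have hIsplit : (I \ N).card + (I ∩ N).card = I.card := by
      rw [Finset.card_sdiff_add_card_inter]
    have hZsplit : Y''.card + W.card = Z.card := by
      rw [hY'', hW, Finset.card_inter_add_card_sdiff]
    omega
  -- finish: translate ncard of the set to the Finset card
  have hset : {u : V | u ∉ Y' ∧ ∃ y ∈ Y', G.Adj y u} =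
      ↑(Finset.univ.filter (fun u => u ∉ Y' ∧ ∃ y ∈ Y', G.Adj y u)) := by
    ext u; simp
  rw [hset, Set.ncard_coe_finset]
  exact key Y'.card Y' rfl hY'
end
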